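/- Let C₁ = {(x,y,0) : (x + 1/2)² + y² = 1}, C₂ = {(x,0,z) : (x − 1/2)² + z² = 1}, and O = convexHull ℝ (C₁ ∪ C₂). For every m ∈ [0,1] and t ∈ [−2π/3, 2π/3], the point P(m,t) = (−1/2 + m/(cos t + 1) + (m−1)cos t, (1−m)sin t, m√(2cos t + 1)/(cos t + 1)) lies in O, and likewise the point with the sign of the third coordinate reversed lies in O. -/

import Mathlib

open Real MeasureTheory

/-- First unit circle: in the plane `z = 0`, centered at `(-1/2, 0, 0)`. -/
def oloidC1 : Set (Fin 3 → ℝ) := {p | (p 0 + 1/2)^2 + (p 1)^2 = 1 ∧ p 2 = 0}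

/-- Second unit circle: in the plane `y = 0`, centered at `(1/2, 0, 0)`. -/
def oloidC2 : Set (Fin 3 → ℝ) := {p | (p 0 - 1/2)^2 + (p 2)^2 = 1 ∧ p 1 = 0}

/-- The oloid: the convex hull of the two circles. -/
def oloid : Set (Fin 3 → ℝ) := convexHull ℝ (oloidC1 ∪ oloidC2)

/-- Complete elliptic integral of the first kind. -/
noncomputable def ellipticK (m : ℝ) : ℝ :=
  ∫ θ in (0:ℝ)..(π/2), 1 / Real.sqrt (1 - m * Real.sin θ ^ 2)

/-- Complete elliptic integral of the second kind. -/
noncomputable def ellipticE (m : ℝ) : ℝ :=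
  ∫ θ in (0:ℝ)..(π/2), Real.sqrt (1 - m * Real.sin θ ^ 2)

/-- Parametrization of the upper sheet of the oloid surface. -/
noncomputable def oloidP (m t : ℝ) : Fin 3 → ℝ :=
  ![-1/2 + m / (Real.cos t + 1) + (m - 1) * Real.cos t,
    (1 - m) * Real.sin t,
    m * Real.sqrt (2 * Real.cos t + 1) / (Real.cos t + 1)]

theorem oloidP_mem_oloid :
    ∀ m ∈ Set.Icc (0:ℝ) 1, ∀ t ∈ Set.Icc (-(2*π/3)) (2*π/3),
      oloidP m t ∈ oloid ∧
      ![oloidP m t 0, oloidP m t 1, -(oloidP m t 2)] ∈ oloid := by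
  intro m hm t ht
  have hpi := Real.pi_pos
  have habs : |t| ≤ 2*π/3 := abs_le.mpr ⟨ht.1, ht.2⟩
  have hc23 : Real.cos (2*π/3) = -(1/2) := by
    have h : (2*π/3) = π - π/3 := by ring
    rw [h, Real.cos_pi_sub, Real.cos_pi_div_three]
  have hc : -(1/2) ≤ Real.cos t := by
    rw [← hc23, ← Real.cos_abs t]
    exact Real.cos_le_cos_of_nonneg_of_le_pi (abs_nonneg t) (by linarith) habs
  have hc1 : Real.cos t + 1 ≠ 0 := by linarith
  have hsq : Real.sqrt (2 * Real.cos t + 1) ^ 2 = 2 * Real.cos t + 1 :=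
    Real.sq_sqrt (by linarith)
  set c := Real.cos t with hcdef
  set s := Real.sin t with hsdef
  have hcs : c ^ 2 + s ^ 2 = 1 := by
    rw [hcdef, hsdef]; rw [add_comm]; exact Real.sin_sq_add_cos_sq t
  set A : Fin 3 → ℝ := ![-c - 1/2, s, 0] with hA
  have hAmem : A ∈ oloidC1 ∪ oloidC2 := by
    left
    constructor
    · show (A 0 + 1/2)^2 + (A 1)^2 = 1
      simp [hA]; nlinarith [hcs]
    · show A 2 = 0
      simp [hA]
  have hBmem : ∀ ε : ℝ, ε = 1 ∨ ε = -1 →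
      (![1/(c+1) - 1/2, 0, ε * (Real.sqrt (2*c+1) / (c+1))] : Fin 3 → ℝ) ∈ oloidC1 ∪ oloidC2 := by
    intro ε hε
    right
    constructor
    · show ((1/(c+1) - 1/2) - 1/2)^2 + (ε * (Real.sqrt (2*c+1) / (c+1)))^2 = 1
      have hε2 : ε ^ 2 = 1 := by rcases hε with h | h <;> rw [h] <;> norm_num
      have hz : (ε * (Real.sqrt (2*c+1) / (c+1)))^2 = (2*c+1)/(c+1)^2 := by
        rw [mul_pow, div_pow, hsq, hε2, one_mul]
      rw [hz]
      field_simp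
      ring
    · show (0:ℝ) = 0
      rfl
  have key : ∀ ε : ℝ, ε = 1 ∨ ε = -1 →
      (![(-1:ℝ)/2 + m / (c + 1) + (m - 1) * c, (1 - m) * s,
          ε * (m * Real.sqrt (2 * c + 1) / (c + 1))] : Fin 3 → ℝ) ∈ oloid := by
    intro ε hε
    set B : Fin 3 → ℝ := ![1/(c+1) - 1/2, 0, ε * (Real.sqrt (2*c+1) / (c+1))] with hB
    have hcomb : (![(-1:ℝ)/2 + m / (c + 1) + (m - 1) * c, (1 - m) * s,
          ε * (m * Real.sqrt (2 * c + 1) / (c + 1))] : Fin 3 → ℝ)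
        = (1 - m) • A + m • B := by
      funext i
      fin_cases i <;> simp [hA, hB] <;> field_simp <;> ring
    rw [hcomb]
    exact (convex_convexHull ℝ (oloidC1 ∪ oloidC2))
      (subset_convexHull ℝ _ hAmem) (subset_convexHull ℝ _ (hBmem ε hε))
      (by linarith [hm.2]) hm.1 (by ring)
  constructor
  · have h1 := key 1 (Or.inl rfl)
    have heq : oloidP m t = ![(-1:ℝ)/2 + m / (c + 1) + (m - 1) * c, (1 - m) * s,
        1 * (m * Real.sqrt (2 * c + 1) / (c + 1))] := by
      funext i
      fin_cases i <;> simp [oloidP, hsdef] <;> ring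
    rwa [heq]
  · have h1 := key (-1) (Or.inr rfl)
    have heq : (![oloidP m t 0, oloidP m t 1, -(oloidP m t 2)] : Fin 3 → ℝ)
        = ![(-1:ℝ)/2 + m / (c + 1) + (m - 1) * c, (1 - m) * s,
        (-1) * (m * Real.sqrt (2 * c + 1) / (c + 1))] := by
      funext i
      fin_cases i <;> simp [oloidP, hsdef] <;> ring
    rwa [heq]
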